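/- Let θ = (γ, μ, σ) with σ > 0 and let x ∈ ℝ satisfy 1 + γz > 0, where z = (x − μ)/σ and u = u_γ(z). Then the γ-score ∂_γ ℓ_θ(x) = (1 − u) D(γ, z) − z/(1 + γz), with D(γ, z) = ∫₀^z t/(1 + γt)² dt, satisfies: (i) if γ ≥ 0 and z ≥ 0, |∂_γ ℓ_θ(x)| ≤ max{ min(z²/2, γ^{−2} log(1 + γz)), min(z, γ^{−1}) }, where γ^{−2} log(1 + γz) and γ^{−1} are interpreted as +∞ when γ = 0; (ii) if γ ≤ 0 and z ≥ 0, |∂_γ ℓ_θ(x)| ≤ max(z², z)/(1 + γz); (iii) if γ ≥ 0 and z ≤ 0, |∂_γ ℓ_θ(x)| ≤ u^{1+γ} max{(log u)², log u}; (iv) if γ ≤ 0 and z ≤ 0, |∂_γ ℓ_θ(x)| ≤ u · max{(log u)², log u}. -/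

import Mathlib

/-- `u_γ(z)` for the GEV family: `(1 + γz)^(−1/γ)` for `γ ≠ 0` and `e^(−z)` for `γ = 0`. -/
noncomputable def gevU (γ z : ℝ) : ℝ :=
  if γ = 0 then Real.exp (-z) else (1 + γ * z) ^ (-γ⁻¹)

/-- `D(γ, z) = ∫₀^z t / (1 + γ t)² dt`, the partial derivative `∂_γ log u_γ(z)`. -/
noncomputable def gevDGamma (γ z : ℝ) : ℝ := ∫ t in (0:ℝ)..z, t / (1 + γ * t) ^ 2

/-- The γ-score of the GEV log-density:
`∂_γ ℓ_θ(x) = (1 − u) D(γ, z) − z/(1 + γz)`, where `z = (x − μ)/σ`, `u = u_γ(z)`. -/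
noncomputable def gevScoreGamma (γ μ σ : ℝ) (x : ℝ) : ℝ :=
  (1 - gevU γ ((x - μ) / σ)) * gevDGamma γ ((x - μ) / σ)
    - ((x - μ) / σ) / (1 + γ * ((x - μ) / σ))

/-- **Bounds on the γ-score of the GEV log-density** for `σ > 0` and `1 + γz > 0`,
`z = (x − μ)/σ`, `u = u_γ(z)`.  In case (i) (`γ ≥ 0 ≤ z`) the quantities
`γ⁻² log(1 + γz)` and `γ⁻¹` are interpreted as `+∞` for `γ = 0`, which is encoded here
by replacing them by the other argument of the corresponding `min` when `γ = 0`. -/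


private lemma abs_sub_le_of_le {a b M : ℝ} (ha : 0 ≤ a) (hb : 0 ≤ b)
    (haM : a ≤ M) (hbM : b ≤ M) : |a - b| ≤ M :=
  abs_le.mpr ⟨by linarith, by linarith⟩

private lemma abs_sub_le_max' {a b c d : ℝ} (ha : 0 ≤ a) (hb : 0 ≤ b)
    (hac : a ≤ c) (hbd : b ≤ d) : |a - b| ≤ max c d := by
  rw [abs_le]
  constructor
  · have := le_max_right c d; linarith
  · have := le_max_left c d; linarith

private lemma exp_le_quadratic {x : ℝ} (hx : x ≤ 0) :
    Real.exp x ≤ 1 + x + x ^ 2 / 2 := by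
  have key : ∀ y : ℝ, HasDerivAt (fun t => 1 + t + t ^ 2 / 2 - Real.exp t)
      (1 + y - Real.exp y) y := by
    intro y
    have h1 : HasDerivAt (fun t : ℝ => 1 + t) 1 y := (hasDerivAt_id y).const_add 1
    have h2 : HasDerivAt (fun t : ℝ => t ^ 2 / 2) y y := by
      have := (hasDerivAt_pow 2 y).div_const 2
      norm_num at this
      exact this
    have := (h1.add h2).sub (Real.hasDerivAt_exp y)
    exact this

  have hanti : AntitoneOn (fun t => 1 + t + t ^ 2 / 2 - Real.exp t) (Set.Iic 0) := by
    apply antitoneOn_of_deriv_nonpos (convex_Iic 0)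
    · exact fun t _ => (key t).continuousAt.continuousWithinAt
    · exact fun t _ => (key t).differentiableAt.differentiableWithinAt
    · intro t _
      rw [(key t).deriv]
      have := Real.add_one_le_exp t
      linarith
  have h0 := hanti (Set.mem_Iic.mpr hx) (Set.mem_Iic.mpr le_rfl) hx
  simp [Real.exp_zero] at h0
  linarith

private lemma exp_sub_le {a : ℝ} (ha : 0 ≤ a) :
    Real.exp a - 1 - a ≤ a ^ 2 / 2 * Real.exp a := by
  have key : ∀ y : ℝ, HasDerivAt (fun t => t ^ 2 / 2 * Real.exp t - Real.exp t + 1 + t)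
      (y * Real.exp y + y ^ 2 / 2 * Real.exp y - Real.exp y + 1) y := by
    intro y
    have h2 : HasDerivAt (fun t : ℝ => t ^ 2 / 2) y y := by
      have := (hasDerivAt_pow 2 y).div_const 2
      norm_num at this
      exact this
    have h3 := h2.mul (Real.hasDerivAt_exp y)
    have := ((h3.sub (Real.hasDerivAt_exp y)).add_const 1).add (hasDerivAt_id y)
    exact this

  have hmono : MonotoneOn (fun t => t ^ 2 / 2 * Real.exp t - Real.exp t + 1 + t)
      (Set.Ici 0) := by
    apply monotoneOn_of_deriv_nonneg (convex_Ici 0)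
    · exact fun t _ => (key t).continuousAt.continuousWithinAt
    · exact fun t _ => (key t).differentiableAt.differentiableWithinAt
    · intro t _
      rw [(key t).deriv]
      have h1 : (1 - t) * Real.exp t ≤ 1 := by
        have h2 : 1 - t ≤ Real.exp (-t) := by
          have := Real.add_one_le_exp (-t); linarith
        calc (1 - t) * Real.exp t ≤ Real.exp (-t) * Real.exp t :=
              mul_le_mul_of_nonneg_right h2 (Real.exp_pos t).le
          _ = 1 := by rw [← Real.exp_add]; simp
      nlinarith [mul_nonneg (sq_nonneg t) (Real.exp_pos t).le]
  have h0 := hmono (Set.mem_Ici.mpr le_rfl) (Set.mem_Ici.mpr ha) ha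
  simp [Real.exp_zero] at h0
  linarith



private lemma one_add_pos_of_mem {γ z : ℝ} (h : 0 < 1 + γ * z) :
    ∀ t ∈ Set.uIcc (0:ℝ) z, 0 < 1 + γ * t := by
  intro t ht
  rcases le_total (0:ℝ) z with hz | hz
  · rw [Set.uIcc_of_le hz] at ht
    rcases le_total 0 γ with hγ | hγ
    · nlinarith [ht.1, ht.2]
    · nlinarith [ht.1, ht.2]
  · rw [Set.uIcc_of_ge hz] at ht
    rcases le_total 0 γ with hγ | hγ
    · nlinarith [ht.1, ht.2]
    · nlinarith [ht.1, ht.2]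

private lemma gevDGamma_eq {γ : ℝ} (hγ : γ ≠ 0) {z : ℝ} (h : 0 < 1 + γ * z) :
    gevDGamma γ z = (Real.log (1 + γ * z) + (1 + γ * z)⁻¹ - 1) / γ ^ 2 := by
  have hpos := one_add_pos_of_mem h
  have hderiv : ∀ t ∈ Set.uIcc (0:ℝ) z,
      HasDerivAt (fun s => (Real.log (1 + γ * s) + (1 + γ * s)⁻¹) / γ ^ 2)
        (t / (1 + γ * t) ^ 2) t := by
    intro t ht
    have ht' := hpos t ht
    have hlin : HasDerivAt (fun s : ℝ => 1 + γ * s) γ t := by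
      simpa using ((hasDerivAt_id t).const_mul γ).const_add 1
    have hlog := hlin.log (ne_of_gt ht')
    have hinv := hlin.inv (ne_of_gt ht')
    have hsum := (hlog.add hinv).div_const (γ ^ 2)
    refine hsum.congr_deriv ?_
    field_simp
    ring
  have hint : IntervalIntegrable (fun t => t / (1 + γ * t) ^ 2)
      MeasureTheory.volume 0 z := by
    apply ContinuousOn.intervalIntegrable
    apply ContinuousOn.div continuousOn_id
    · exact ((continuous_const.add (continuous_const.mul continuous_id)).pow 2).continuousOn
    · exact fun t ht => pow_ne_zero 2 (ne_of_gt (hpos t ht))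
  have hF := intervalIntegral.integral_eq_sub_of_hasDerivAt hderiv hint
  rw [gevDGamma, hF]
  norm_num [Real.log_one]
  ring

private lemma gevDGamma_zero (z : ℝ) : gevDGamma 0 z = z ^ 2 / 2 := by
  have : gevDGamma 0 z = ∫ t in (0:ℝ)..z, t := by
    rw [gevDGamma]
    congr 1
    funext t
    norm_num
  rw [this, integral_id]
  ring

private lemma gevDGamma_le_sq {γ z : ℝ} (hγ : 0 ≤ γ) (hz : 0 ≤ z) :
    gevDGamma γ z ≤ z ^ 2 / 2 := by
  have hpos : ∀ t ∈ Set.Icc (0:ℝ) z, (0:ℝ) < 1 + γ * t := by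
    intro t ht
    nlinarith [ht.1]
  have h1 : gevDGamma γ z ≤ ∫ t in (0:ℝ)..z, t := by
    apply intervalIntegral.integral_mono_on hz
    · apply ContinuousOn.intervalIntegrable
      apply ContinuousOn.div continuousOn_id
      · exact ((continuous_const.add (continuous_const.mul continuous_id)).pow 2).continuousOn
      · intro t ht
        rw [Set.uIcc_of_le hz] at ht
        exact pow_ne_zero 2 (ne_of_gt (hpos t ht))
    · exact intervalIntegral.intervalIntegrable_id
    · intro t ht
      have h2 : (1:ℝ) ≤ (1 + γ * t) ^ 2 := by nlinarith [ht.1, mul_nonneg hγ ht.1]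
      exact div_le_self ht.1 h2
  rw [integral_id] at h1
  calc gevDGamma γ z ≤ (z ^ 2 - 0 ^ 2) / 2 := h1
    _ = z ^ 2 / 2 := by ring

private lemma log_lb {w : ℝ} (hw : 0 < w) : 1 - w⁻¹ ≤ Real.log w := by
  have := Real.log_le_sub_one_of_pos (inv_pos.mpr hw)
  rw [Real.log_inv] at this
  linarith

private lemma case_i {γ z : ℝ} (h : 0 < 1 + γ * z) (hγ : 0 ≤ γ) (hz : 0 ≤ z) :
    |(1 - gevU γ z) * gevDGamma γ z - z / (1 + γ * z)| ≤
      max (min (z ^ 2 / 2)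
            (if γ = 0 then z ^ 2 / 2 else γ⁻¹ ^ 2 * Real.log (1 + γ * z)))
          (min z (if γ = 0 then z else γ⁻¹)) := by
  have hw1 : (1:ℝ) ≤ 1 + γ * z := by nlinarith
  have hu0 : 0 ≤ gevU γ z := by
    rw [gevU]; split
    · exact (Real.exp_pos _).le
    · exact Real.rpow_nonneg (by linarith) _
  have hu1 : gevU γ z ≤ 1 := by
    rw [gevU]; split
    · exact Real.exp_le_one_iff.mpr (by linarith)
    · next hγ0 =>
      have hγpos : 0 < γ := lt_of_le_of_ne hγ (Ne.symm hγ0)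
      exact Real.rpow_le_one_of_one_le_of_nonpos hw1
        (neg_nonpos.mpr (inv_nonneg.mpr hγ))
  have hDnn : 0 ≤ gevDGamma γ z := by
    by_cases hγ0 : γ = 0
    · subst hγ0; rw [gevDGamma_zero]; positivity
    · rw [gevDGamma_eq hγ0 h]
      have := log_lb h
      have hsq : (0:ℝ) < γ ^ 2 := by positivity
      apply div_nonneg _ hsq.le
      linarith
  have hD2 : gevDGamma γ z ≤ z ^ 2 / 2 := gevDGamma_le_sq hγ hz
  have ha1 : 0 ≤ (1 - gevU γ z) * gevDGamma γ z := mul_nonneg (by linarith) hDnn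
  have ha2 : (1 - gevU γ z) * gevDGamma γ z ≤ gevDGamma γ z := by
    nlinarith
  have hb1 : 0 ≤ z / (1 + γ * z) := div_nonneg hz h.le
  have hb2 : z / (1 + γ * z) ≤ z := div_le_self hz hw1
  by_cases hγ0 : γ = 0
  · rw [if_pos hγ0, if_pos hγ0]
    exact abs_sub_le_max' ha1 hb1 (le_min (by linarith) (by linarith))
      (le_min hb2 hb2)
  · rw [if_neg hγ0, if_neg hγ0]
    have hγpos : 0 < γ := lt_of_le_of_ne hγ (Ne.symm hγ0)
    have hD3 : gevDGamma γ z ≤ γ⁻¹ ^ 2 * Real.log (1 + γ * z) := by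
      rw [gevDGamma_eq hγ0 h]
      have hinv : (1 + γ * z)⁻¹ ≤ 1 := inv_le_one_of_one_le₀ hw1
      have hnum : Real.log (1 + γ * z) + (1 + γ * z)⁻¹ - 1 ≤ Real.log (1 + γ * z) := by
        linarith
      have heq : γ⁻¹ ^ 2 * Real.log (1 + γ * z) = Real.log (1 + γ * z) / γ ^ 2 := by
        field_simp
      rw [heq]
      exact div_le_div_of_nonneg_right hnum (by positivity) |>.trans_eq rfl
    have hb3 : z / (1 + γ * z) ≤ γ⁻¹ := by
      rw [div_le_iff₀ h]
      have hinv : 0 ≤ γ⁻¹ := inv_nonneg.mpr hγ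
      have : γ⁻¹ * (1 + γ * z) = γ⁻¹ + z := by field_simp
      rw [this]; linarith
    exact abs_sub_le_max' ha1 hb1 (le_min (by linarith) (by linarith))
      (le_min hb2 hb3)

private lemma case_ii {γ z : ℝ} (h : 0 < 1 + γ * z) (hγ : γ ≤ 0) (hz : 0 ≤ z) :
    |(1 - gevU γ z) * gevDGamma γ z - z / (1 + γ * z)| ≤
      max (z ^ 2) z / (1 + γ * z) := by
  have hw1 : 1 + γ * z ≤ 1 := by nlinarith
  have hu0 : 0 ≤ gevU γ z := by
    rw [gevU]; split
    · exact (Real.exp_pos _).le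
    · exact Real.rpow_nonneg h.le _
  have hu1 : gevU γ z ≤ 1 := by
    rw [gevU]; split
    · next hγ0 => subst hγ0; exact Real.exp_le_one_iff.mpr (by linarith)
    · next hγ0 =>
      have hγneg : γ < 0 := lt_of_le_of_ne hγ hγ0
      exact Real.rpow_le_one h.le hw1 (neg_nonneg.mpr (inv_nonpos.mpr hγ))
  have hDnn : 0 ≤ gevDGamma γ z := by
    by_cases hγ0 : γ = 0
    · subst hγ0; rw [gevDGamma_zero]; positivity
    · rw [gevDGamma_eq hγ0 h]
      have h1 := Real.log_le_sub_one_of_pos (inv_pos.mpr h)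
      rw [Real.log_inv] at h1
      apply div_nonneg _ (by positivity : (0:ℝ) ≤ γ ^ 2)
      linarith
  have hD2 : gevDGamma γ z ≤ z ^ 2 / (1 + γ * z) := by
    by_cases hγ0 : γ = 0
    · subst hγ0; rw [gevDGamma_zero]; norm_num
      nlinarith
    · rw [gevDGamma_eq hγ0 h]
      have h1 : Real.log (1 + γ * z) ≤ γ * z := by
        have := Real.log_le_sub_one_of_pos h; linarith
      have h2 : Real.log (1 + γ * z) + (1 + γ * z)⁻¹ - 1 ≤ γ ^ 2 * z ^ 2 / (1 + γ * z) := by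
        have h3 : γ * z + (1 + γ * z)⁻¹ - 1 = γ ^ 2 * z ^ 2 / (1 + γ * z) := by
          field_simp
          ring
        linarith
      calc (Real.log (1 + γ * z) + (1 + γ * z)⁻¹ - 1) / γ ^ 2
          ≤ (γ ^ 2 * z ^ 2 / (1 + γ * z)) / γ ^ 2 :=
            div_le_div_of_nonneg_right h2 (by positivity)
        _ = z ^ 2 / (1 + γ * z) := by
            field_simp
  have ha1 : 0 ≤ (1 - gevU γ z) * gevDGamma γ z := mul_nonneg (by linarith) hDnn
  have ha2 : (1 - gevU γ z) * gevDGamma γ z ≤ gevDGamma γ z := by nlinarith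
  have hb1 : 0 ≤ z / (1 + γ * z) := div_nonneg hz h.le
  apply abs_sub_le_of_le ha1 hb1
  · calc (1 - gevU γ z) * gevDGamma γ z ≤ z ^ 2 / (1 + γ * z) := le_trans ha2 hD2
      _ ≤ max (z ^ 2) z / (1 + γ * z) :=
        div_le_div_of_nonneg_right (le_max_left _ _) h.le
  · exact div_le_div_of_nonneg_right (le_max_right _ _) h.le

-- the γ = 0 sub-case, common to (iii) and (iv) after `rpow_one`
private lemma case_zero {z : ℝ} (hz : z ≤ 0) :
    |(1 - gevU 0 z) * gevDGamma 0 z - z / (1 + 0 * z)| ≤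
      gevU 0 z * max (Real.log (gevU 0 z) ^ 2) (Real.log (gevU 0 z)) := by
  rw [gevDGamma_zero, gevU, if_pos rfl, Real.log_exp]
  have hu : 1 ≤ Real.exp (-z) := Real.one_le_exp (by linarith)
  have hkey : (1 - Real.exp (-z)) * (z ^ 2 / 2) - z / (1 + 0 * z) =
      -((Real.exp (-z) - 1) * (z ^ 2 / 2) - (-z)) := by ring_nf
  rw [hkey, abs_neg]
  have hmax1 : z ^ 2 ≤ max ((-z) ^ 2) (-z) := by
    have : z ^ 2 = (-z) ^ 2 := by ring
    rw [this]; exact le_max_left _ _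
  have hmax2 : -z ≤ max ((-z) ^ 2) (-z) := le_max_right _ _
  have hmaxnn : 0 ≤ max ((-z) ^ 2) (-z) := le_trans (by linarith) hmax2
  apply abs_sub_le_of_le
  · apply mul_nonneg (by linarith) (by positivity)
  · linarith
  · calc (Real.exp (-z) - 1) * (z ^ 2 / 2) ≤ Real.exp (-z) * z ^ 2 := by nlinarith
      _ ≤ Real.exp (-z) * max ((-z) ^ 2) (-z) := by nlinarith
  · calc -z ≤ Real.exp (-z) * (-z) := by nlinarith
      _ ≤ Real.exp (-z) * max ((-z) ^ 2) (-z) := by nlinarith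

private lemma case_iii {γ z : ℝ} (h : 0 < 1 + γ * z) (hγ : 0 ≤ γ) (hz : z ≤ 0) :
    |(1 - gevU γ z) * gevDGamma γ z - z / (1 + γ * z)| ≤
      gevU γ z ^ (1 + γ : ℝ) *
        max (Real.log (gevU γ z) ^ 2) (Real.log (gevU γ z)) := by
  by_cases hγ0 : γ = 0
  · subst hγ0
    have h1 : gevU 0 z ^ (1 + (0:ℝ) : ℝ) = gevU 0 z := by
      norm_num
    rw [h1]
    simpa using case_zero hz
  · have hγpos : 0 < γ := lt_of_le_of_ne hγ (Ne.symm hγ0)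
    have hw1 : 1 + γ * z ≤ 1 := by nlinarith
    have huval : gevU γ z = (1 + γ * z) ^ (-γ⁻¹) := by rw [gevU, if_neg hγ0]
    have hupos : 0 < gevU γ z := by rw [huval]; exact Real.rpow_pos_of_pos h _
    have hu1 : 1 ≤ gevU γ z := by
      rw [huval]
      exact Real.one_le_rpow_of_pos_of_le_one_of_nonpos h hw1
        (neg_nonpos.mpr (inv_nonneg.mpr hγ))
    have hlogu : Real.log (gevU γ z) = -γ⁻¹ * Real.log (1 + γ * z) := by
      rw [huval, Real.log_rpow h]
    have hL : Real.log (1 + γ * z) ≤ 0 := Real.log_nonpos h.le hw1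
    have hlogu_nn : 0 ≤ Real.log (gevU γ z) := by
      rw [hlogu]
      have : 0 ≤ γ⁻¹ := inv_nonneg.mpr hγ
      nlinarith
    have hwinv : (0:ℝ) ≤ (1 + γ * z)⁻¹ := inv_nonneg.mpr h.le
    -- D bounds
    have hwexp : (1 + γ * z)⁻¹ = Real.exp (-Real.log (1 + γ * z)) := by
      rw [Real.exp_neg, Real.exp_log h]
    have hE := exp_sub_le (a := -Real.log (1 + γ * z)) (by linarith)
    have hDle : gevDGamma γ z ≤
        Real.log (gevU γ z) ^ 2 / 2 * (1 + γ * z)⁻¹ := by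
      rw [gevDGamma_eq hγ0 h]
      have hnum : Real.log (1 + γ * z) + (1 + γ * z)⁻¹ - 1 ≤
          Real.log (1 + γ * z) ^ 2 / 2 * (1 + γ * z)⁻¹ := by
        rw [hwexp]
        nlinarith [hE]
      calc (Real.log (1 + γ * z) + (1 + γ * z)⁻¹ - 1) / γ ^ 2
          ≤ (Real.log (1 + γ * z) ^ 2 / 2 * (1 + γ * z)⁻¹) / γ ^ 2 :=
            div_le_div_of_nonneg_right hnum (by positivity)
        _ = Real.log (gevU γ z) ^ 2 / 2 * (1 + γ * z)⁻¹ := by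
            rw [hlogu, neg_mul, neg_sq, mul_pow, inv_pow]; ring
    have hDnn : 0 ≤ gevDGamma γ z := by
      rw [gevDGamma_eq hγ0 h]
      have := log_lb h
      apply div_nonneg _ (by positivity : (0:ℝ) ≤ γ ^ 2)
      linarith
    -- u^(1+γ) = u * w⁻¹
    have hpow : gevU γ z ^ (1 + γ : ℝ) = gevU γ z * (1 + γ * z)⁻¹ := by
      rw [Real.rpow_add hupos, Real.rpow_one]
      congr 1
      rw [huval, ← Real.rpow_mul h.le, show -γ⁻¹ * γ = -1 by field_simp,
        Real.rpow_neg_one]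
    -- -z ≤ log u
    have hzlog : -z ≤ Real.log (gevU γ z) := by
      have h1 : Real.log (1 + γ * z) ≤ γ * z := by
        have := Real.log_le_sub_one_of_pos h; linarith
      have h2 : γ⁻¹ * Real.log (1 + γ * z) ≤ γ⁻¹ * (γ * z) :=
        mul_le_mul_of_nonneg_left h1 (inv_nonneg.mpr hγ)
      rw [inv_mul_cancel_left₀ hγ0] at h2
      rw [hlogu]; linarith
    have hkey : (1 - gevU γ z) * gevDGamma γ z - z / (1 + γ * z) =
        -((gevU γ z - 1) * gevDGamma γ z - (-z) / (1 + γ * z)) := by ring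
    rw [hkey, abs_neg]
    have hmax1 : Real.log (gevU γ z) ^ 2 ≤
        max (Real.log (gevU γ z) ^ 2) (Real.log (gevU γ z)) := le_max_left _ _
    have hmax2 : Real.log (gevU γ z) ≤
        max (Real.log (gevU γ z) ^ 2) (Real.log (gevU γ z)) := le_max_right _ _
    apply abs_sub_le_of_le
    · exact mul_nonneg (by linarith) hDnn
    · exact div_nonneg (by linarith) h.le
    · calc (gevU γ z - 1) * gevDGamma γ z
          ≤ gevU γ z * (Real.log (gevU γ z) ^ 2 / 2 * (1 + γ * z)⁻¹) := by
            apply mul_le_mul (by linarith) hDle hDnn hupos.le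
        _ ≤ gevU γ z ^ (1 + γ : ℝ) *
              max (Real.log (gevU γ z) ^ 2) (Real.log (gevU γ z)) := by
            rw [hpow]
            nlinarith [mul_nonneg (mul_nonneg hupos.le hwinv)
              (sub_nonneg.mpr hmax1), mul_nonneg (mul_nonneg hupos.le hwinv)
              (sq_nonneg (Real.log (gevU γ z)))]
    · calc (-z) / (1 + γ * z) = (-z) * (1 + γ * z)⁻¹ := div_eq_mul_inv _ _
        _ ≤ gevU γ z ^ (1 + γ : ℝ) *
              max (Real.log (gevU γ z) ^ 2) (Real.log (gevU γ z)) := by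
            rw [hpow]
            nlinarith [mul_nonneg (mul_nonneg (sub_nonneg.mpr hu1) hwinv) hlogu_nn,
              mul_nonneg (sub_nonneg.mpr hzlog) hwinv,
              mul_nonneg (mul_nonneg hupos.le hwinv) (sub_nonneg.mpr hmax2)]

private lemma case_iv {γ z : ℝ} (h : 0 < 1 + γ * z) (hγ : γ ≤ 0) (hz : z ≤ 0) :
    |(1 - gevU γ z) * gevDGamma γ z - z / (1 + γ * z)| ≤
      gevU γ z * max (Real.log (gevU γ z) ^ 2) (Real.log (gevU γ z)) := by
  by_cases hγ0 : γ = 0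
  · subst hγ0
    simpa using case_zero hz
  · have hγneg : γ < 0 := lt_of_le_of_ne hγ hγ0
    have hw1 : 1 ≤ 1 + γ * z := by nlinarith
    have huval : gevU γ z = (1 + γ * z) ^ (-γ⁻¹) := by rw [gevU, if_neg hγ0]
    have hupos : 0 < gevU γ z := by rw [huval]; exact Real.rpow_pos_of_pos h _
    have hexp_nn : (0:ℝ) ≤ -γ⁻¹ := by
      have : γ⁻¹ ≤ 0 := inv_nonpos.mpr hγ
      linarith
    have hu1 : 1 ≤ gevU γ z := by
      rw [huval]
      exact Real.one_le_rpow hw1 hexp_nn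
    have hlogu : Real.log (gevU γ z) = -γ⁻¹ * Real.log (1 + γ * z) := by
      rw [huval, Real.log_rpow h]
    have hL : 0 ≤ Real.log (1 + γ * z) := Real.log_nonneg hw1
    have hlogu_nn : 0 ≤ Real.log (gevU γ z) := by
      rw [hlogu]; exact mul_nonneg hexp_nn hL
    -- D ≤ (log u)^2 / 2
    have hwexp : (1 + γ * z)⁻¹ = Real.exp (-Real.log (1 + γ * z)) := by
      rw [Real.exp_neg, Real.exp_log h]
    have hE := exp_le_quadratic (x := -Real.log (1 + γ * z)) (by linarith)
    have hDle : gevDGamma γ z ≤ Real.log (gevU γ z) ^ 2 / 2 := by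
      rw [gevDGamma_eq hγ0 h]
      have hnum : Real.log (1 + γ * z) + (1 + γ * z)⁻¹ - 1 ≤
          Real.log (1 + γ * z) ^ 2 / 2 := by
        rw [hwexp]
        nlinarith [hE]
      calc (Real.log (1 + γ * z) + (1 + γ * z)⁻¹ - 1) / γ ^ 2
          ≤ (Real.log (1 + γ * z) ^ 2 / 2) / γ ^ 2 :=
            div_le_div_of_nonneg_right hnum (by positivity)
        _ = Real.log (gevU γ z) ^ 2 / 2 := by
            rw [hlogu, neg_mul, neg_sq, mul_pow, inv_pow]; ring
    have hDnn : 0 ≤ gevDGamma γ z := by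
      rw [gevDGamma_eq hγ0 h]
      have := log_lb h
      apply div_nonneg _ (by positivity : (0:ℝ) ≤ γ ^ 2)
      linarith
    -- -z/(1+γz) ≤ log u
    have hzlog : -z / (1 + γ * z) ≤ Real.log (gevU γ z) := by
      have h1 : 1 - (1 + γ * z)⁻¹ ≤ Real.log (1 + γ * z) := log_lb h
      have h1' : γ * z / (1 + γ * z) ≤ Real.log (1 + γ * z) := by
        have : γ * z / (1 + γ * z) = 1 - (1 + γ * z)⁻¹ := by
          rw [eq_sub_iff_add_eq, div_add' _ _ _ (ne_of_gt h), inv_mul_cancel₀ (ne_of_gt h)]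
          rw [show γ * z + 1 = 1 + γ * z by ring, div_self (ne_of_gt h)]
        rw [this]; exact h1
      have h2 : (-γ⁻¹) * (γ * z / (1 + γ * z)) ≤
          (-γ⁻¹) * Real.log (1 + γ * z) :=
        mul_le_mul_of_nonneg_left h1' hexp_nn
      have h3 : (-γ⁻¹) * (γ * z / (1 + γ * z)) = -z / (1 + γ * z) := by
        rw [show (-γ⁻¹) * (γ * z / (1 + γ * z)) =
          -((γ⁻¹ * γ) * (z / (1 + γ * z))) by ring, inv_mul_cancel₀ hγ0]
        ring
      rw [hlogu]; rw [h3] at h2; linarith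
    have hkey : (1 - gevU γ z) * gevDGamma γ z - z / (1 + γ * z) =
        -((gevU γ z - 1) * gevDGamma γ z - (-z) / (1 + γ * z)) := by ring
    rw [hkey, abs_neg]
    have hmax1 : Real.log (gevU γ z) ^ 2 ≤
        max (Real.log (gevU γ z) ^ 2) (Real.log (gevU γ z)) := le_max_left _ _
    have hmax2 : Real.log (gevU γ z) ≤
        max (Real.log (gevU γ z) ^ 2) (Real.log (gevU γ z)) := le_max_right _ _
    apply abs_sub_le_of_le
    · exact mul_nonneg (by linarith) hDnn
    · exact div_nonneg (by linarith) h.le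
    · calc (gevU γ z - 1) * gevDGamma γ z
          ≤ gevU γ z * (Real.log (gevU γ z) ^ 2 / 2) := by
            apply mul_le_mul (by linarith) hDle hDnn hupos.le
        _ ≤ gevU γ z * max (Real.log (gevU γ z) ^ 2) (Real.log (gevU γ z)) := by
            nlinarith [mul_nonneg hupos.le (sub_nonneg.mpr hmax1),
              mul_nonneg hupos.le (sq_nonneg (Real.log (gevU γ z)))]
    · calc -z / (1 + γ * z) ≤ Real.log (gevU γ z) := hzlog
        _ ≤ gevU γ z * max (Real.log (gevU γ z) ^ 2) (Real.log (gevU γ z)) := by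
            nlinarith [mul_nonneg (sub_nonneg.mpr hu1) hlogu_nn,
              mul_nonneg hupos.le (sub_nonneg.mpr hmax2)]


theorem gevScoreGamma_bounds (γ μ σ : ℝ) (hσ : 0 < σ) (x : ℝ)
    (h : 0 < 1 + γ * ((x - μ) / σ)) :
    (0 ≤ γ → 0 ≤ (x - μ) / σ →
      |gevScoreGamma γ μ σ x| ≤
        max (min (((x - μ) / σ) ^ 2 / 2)
              (if γ = 0 then ((x - μ) / σ) ^ 2 / 2
               else γ⁻¹ ^ 2 * Real.log (1 + γ * ((x - μ) / σ))))
            (min ((x - μ) / σ) (if γ = 0 then (x - μ) / σ else γ⁻¹))) ∧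
    (γ ≤ 0 → 0 ≤ (x - μ) / σ →
      |gevScoreGamma γ μ σ x| ≤
        max (((x - μ) / σ) ^ 2) ((x - μ) / σ) / (1 + γ * ((x - μ) / σ))) ∧
    (0 ≤ γ → (x - μ) / σ ≤ 0 →
      |gevScoreGamma γ μ σ x| ≤
        gevU γ ((x - μ) / σ) ^ (1 + γ) *
          max (Real.log (gevU γ ((x - μ) / σ)) ^ 2) (Real.log (gevU γ ((x - μ) / σ)))) ∧
    (γ ≤ 0 → (x - μ) / σ ≤ 0 →
      |gevScoreGamma γ μ σ x| ≤
        gevU γ ((x - μ) / σ) *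
          max (Real.log (gevU γ ((x - μ) / σ)) ^ 2) (Real.log (gevU γ ((x - μ) / σ)))) := by
  refine ⟨fun hγ hz => ?_, fun hγ hz => ?_, fun hγ hz => ?_, fun hγ hz => ?_⟩
  · exact case_i h hγ hz
  · exact case_ii h hγ hz
  · exact case_iii h hγ hz
  · exact case_iv h hγ hz
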